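/- With G ≺ H, 𝒜, ℬ d-closed as in the combinatorial set-up, the set CH(ℬ/𝒜) of coheirs over 𝒜 is a sub-semigroup of (S(ℬ), *), and the restriction map r : CH(ℬ/𝒜) → S(𝒜) is a semigroup isomorphism with inverse p ↦ p^ℬ. -/
import Mathlib


open Set

/-- Left translate of a set: $hA = \{h·a : a ∈ A\}$. -/
def trL {H : Type*} [Group H] (h : H) (A : Set H) : Set H := (fun x => h * x) '' A

/-- A Boolean algebra of subsets of $T ⊆ H$ closed under left translation by elements
of $T$ (complements are taken relative to $T$). -/
def IsAlgOn {H : Type*} [Group H] (T : Set H) (𝒜 : Set (Set H)) : Prop :=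
  (∀ A ∈ 𝒜, A ⊆ T) ∧ ∅ ∈ 𝒜 ∧ T ∈ 𝒜 ∧ (∀ A ∈ 𝒜, T \ A ∈ 𝒜) ∧
    (∀ A ∈ 𝒜, ∀ B ∈ 𝒜, A ∪ B ∈ 𝒜) ∧ ∀ g ∈ T, ∀ A ∈ 𝒜, trL g A ∈ 𝒜

/-- An ultrafilter on the algebra 𝒜 of subsets of $T$. -/
def IsUltraOn {H : Type*} [Group H] (T : Set H) (𝒜 p : Set (Set H)) : Prop :=
  p ⊆ 𝒜 ∧ ∅ ∉ p ∧ T ∈ p ∧ (∀ A ∈ p, ∀ B ∈ p, A ∩ B ∈ p) ∧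
    (∀ A ∈ p, ∀ B ∈ 𝒜, A ⊆ B → B ∈ p) ∧ ∀ A ∈ 𝒜, A ∈ p ∨ T \ A ∈ p

/-- The map $d_p(A) = \{g ∈ T : g⁻¹A ∈ p\}$. -/
def dmap {H : Type*} [Group H] (T : Set H) (p : Set (Set H)) (A : Set H) : Set H :=
  {g : H | g ∈ T ∧ trL g⁻¹ A ∈ p}

/-- 𝒜 is d-closed. -/
def DClosedOn {H : Type*} [Group H] (T : Set H) (𝒜 : Set (Set H)) : Prop :=
  ∀ p : Set (Set H), IsUltraOn T 𝒜 p → ∀ A ∈ 𝒜, dmap T p A ∈ 𝒜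

/-- The semigroup operation on ultrafilters: $A ∈ p*q$ iff $A ∈ 𝒜$ and $d_q(A) ∈ p$. -/
def ustar {H : Type*} [Group H] (T : Set H) (𝒜 p q : Set (Set H)) : Set (Set H) :=
  {A | A ∈ 𝒜 ∧ dmap T q A ∈ p}

/-- The combinatorial set-up: $G ≺ H$ groups, 𝒜 a d-closed $G$-algebra of subsets of
$G$, ℬ a d-closed $H$-algebra of subsets of $H$, and a Boolean monomorphism
$A ↦ A^\#$ from 𝒜 to ℬ respecting left translation by elements of $G$, with
$A^\# ∩ G = A$ and $ℬ|_G = 𝒜$.  The field `elem` records the combinatorial content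
of the elementarity $G ≺ H$: a set of 𝒜 whose $\#$-extension is nonempty is
itself nonempty. -/
structure CombSetup (H : Type*) [Group H] where
  G : Subgroup H
  𝒜 : Set (Set H)
  ℬ : Set (Set H)
  sharp : Set H → Set H
  alg𝒜 : IsAlgOn (G : Set H) 𝒜
  algℬ : IsAlgOn (univ : Set H) ℬ
  dclosed𝒜 : DClosedOn (G : Set H) 𝒜
  dclosedℬ : DClosedOn (univ : Set H) ℬ
  sharp_mem : ∀ A ∈ 𝒜, sharp A ∈ ℬ
  sharp_inter : ∀ A ∈ 𝒜, sharp A ∩ (G : Set H) = A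
  sharp_empty : sharp ∅ = ∅
  sharp_union : ∀ A ∈ 𝒜, ∀ B ∈ 𝒜, sharp (A ∪ B) = sharp A ∪ sharp B
  sharp_compl : ∀ A ∈ 𝒜, sharp ((G : Set H) \ A) = (sharp A)ᶜ
  sharp_trans : ∀ g ∈ G, ∀ A ∈ 𝒜, sharp (trL g A) = trL g (sharp A)
  restrict_mem : ∀ B ∈ ℬ, B ∩ (G : Set H) ∈ 𝒜
  elem : ∀ A ∈ 𝒜, (sharp A).Nonempty → A.Nonempty

variable {H : Type*} [Group H]

/-- The restriction map $r : S(ℬ) → S(𝒜)$, $r(q) = \{A ∈ 𝒜 : A^\# ∈ q\}$. -/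
def CombSetup.res (C : CombSetup H) (q : Set (Set H)) : Set (Set H) :=
  {A | A ∈ C.𝒜 ∧ C.sharp A ∈ q}

/-- $q ∈ S(ℬ)$ is a weak heir of $p ∈ S(𝒜)$: $d_q(A^\#) = (d_p A)^\#$ for all $A ∈ 𝒜$. -/
def CombSetup.IsWeakHeir (C : CombSetup H) (q p : Set (Set H)) : Prop :=
  IsUltraOn (univ : Set H) C.ℬ q ∧ IsUltraOn (C.G : Set H) C.𝒜 p ∧
    ∀ A ∈ C.𝒜, dmap (univ : Set H) q (C.sharp A) = C.sharp (dmap (C.G : Set H) p A)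

/-- $q ∈ S(ℬ)$ is a weak coheir of $p ∈ S(𝒜)$: for every $A ∈ 𝒜$ and $s ∈ S(ℬ)$,
$d_s(A^\#) ∈ q ↔ d_s(A^\#) ∩ G ∈ p$. -/
def CombSetup.IsWeakCoheir (C : CombSetup H) (q p : Set (Set H)) : Prop :=
  IsUltraOn (univ : Set H) C.ℬ q ∧ IsUltraOn (C.G : Set H) C.𝒜 p ∧
    ∀ A ∈ C.𝒜, ∀ s : Set (Set H), IsUltraOn (univ : Set H) C.ℬ s →
      (dmap (univ : Set H) s (C.sharp A) ∈ q ↔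
        dmap (univ : Set H) s (C.sharp A) ∩ (C.G : Set H) ∈ p)

/-- The coheir extension $p^ℬ = \{B ∈ ℬ : B ∩ G ∈ p\}$. -/
def CombSetup.coheirExt (C : CombSetup H) (p : Set (Set H)) : Set (Set H) :=
  {B | B ∈ C.ℬ ∧ B ∩ (C.G : Set H) ∈ p}

/-- $q ∈ S(ℬ)$ is a coheir over 𝒜: every set in $q$ meets $G$. -/
def CombSetup.IsCoheir (C : CombSetup H) (q : Set (Set H)) : Prop :=
  IsUltraOn (univ : Set H) C.ℬ q ∧ ∀ B ∈ q, (B ∩ (C.G : Set H)).Nonempty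

/-! ### Auxiliary lemmas -/

section Aux

lemma mem_trL {h x : H} {A : Set H} : x ∈ trL h A ↔ h⁻¹ * x ∈ A := by
  constructor
  · rintro ⟨a, ha, rfl⟩; simpa
  · intro hx; exact ⟨h⁻¹ * x, hx, by group⟩

lemma trL_empty (h : H) : trL h (∅ : Set H) = ∅ := image_empty _

lemma trL_univ (h : H) : trL h (univ : Set H) = univ := by
  ext x; simp [mem_trL]

lemma trL_inter (h : H) (A B : Set H) : trL h (A ∩ B) = trL h A ∩ trL h B := by
  ext x; simp [mem_trL]

lemma trL_diff (h : H) (A B : Set H) : trL h (A \ B) = trL h A \ trL h B := by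
  ext x; simp [mem_trL]

lemma trL_mono (h : H) {A B : Set H} (hAB : A ⊆ B) : trL h A ⊆ trL h B :=
  image_mono hAB

lemma alg_inter {T : Set H} {𝒜 : Set (Set H)} (halg : IsAlgOn T 𝒜) {A B : Set H}
    (hA : A ∈ 𝒜) (hB : B ∈ 𝒜) : A ∩ B ∈ 𝒜 := by
  have hAT := halg.1 A hA
  have hBT := halg.1 B hB
  have key : A ∩ B = T \ ((T \ A) ∪ (T \ B)) := by
    ext x
    simp only [mem_inter_iff, mem_diff, mem_union, not_or, not_and, not_not]
    constructor
    · intro ⟨hxA, hxB⟩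
      exact ⟨hAT hxA, fun _ => hxA, fun _ => hxB⟩
    · intro ⟨hxT, h1, h2⟩
      exact ⟨h1 hxT, h2 hxT⟩
  rw [key]
  exact halg.2.2.2.1 _ (halg.2.2.2.2.1 _ (halg.2.2.2.1 A hA) _ (halg.2.2.2.1 B hB))

/-- In an ultrafilter, a pair of complementary sets: exactly one belongs. -/
lemma ultra_compl_iff {T : Set H} {𝒜 p : Set (Set H)} (hp : IsUltraOn T 𝒜 p)
    {A : Set H} (hA : A ∈ 𝒜) (hAT : A ⊆ T) : T \ A ∈ p ↔ A ∉ p := by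
  obtain ⟨hsub, hne, hT, hinter, hup, hdich⟩ := hp
  constructor
  · intro hTA hAp
    have : A ∩ (T \ A) ∈ p := hinter A hAp _ hTA
    have : A ∩ (T \ A) = ∅ := by
      ext x; simp only [mem_inter_iff, mem_diff, mem_empty_iff_false, iff_false]
      tauto
    exact hne (by rwa [this] at ‹A ∩ (T \ A) ∈ p›)
  · intro hAp
    rcases hdich A hA with h | h
    · exact absurd h hAp
    · exact h

variable (C : CombSetup H)

lemma sharp_G : C.sharp (C.G : Set H) = univ := by
  have h := C.sharp_compl ∅ C.alg𝒜.2.1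
  rw [diff_empty, C.sharp_empty] at h
  rw [h, compl_empty]

lemma sharp_mono {A B : Set H} (hA : A ∈ C.𝒜) (hB : B ∈ C.𝒜) (hAB : A ⊆ B) :
    C.sharp A ⊆ C.sharp B := by
  have : C.sharp B = C.sharp A ∪ C.sharp B := by
    rw [← C.sharp_union A hA B hB, union_eq_self_of_subset_left hAB]
  rw [this]; exact subset_union_left

lemma sharp_inter' {A B : Set H} (hA : A ∈ C.𝒜) (hB : B ∈ C.𝒜) :
    C.sharp (A ∩ B) = C.sharp A ∩ C.sharp B := by
  have hAT := C.alg𝒜.1 A hA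
  have hBT := C.alg𝒜.1 B hB
  have hGA : (C.G : Set H) \ A ∈ C.𝒜 := C.alg𝒜.2.2.2.1 A hA
  have hGB : (C.G : Set H) \ B ∈ C.𝒜 := C.alg𝒜.2.2.2.1 B hB
  have hU : ((C.G : Set H) \ A) ∪ ((C.G : Set H) \ B) ∈ C.𝒜 :=
    C.alg𝒜.2.2.2.2.1 _ hGA _ hGB
  have key : A ∩ B = (C.G : Set H) \ (((C.G : Set H) \ A) ∪ ((C.G : Set H) \ B)) := by
    ext x
    simp only [mem_inter_iff, mem_diff, mem_union, not_or, not_and, not_not]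
    constructor
    · intro ⟨hxA, hxB⟩; exact ⟨hAT hxA, fun _ => hxA, fun _ => hxB⟩
    · intro ⟨hxT, h1, h2⟩; exact ⟨h1 hxT, h2 hxT⟩
  rw [key, C.sharp_compl _ hU, C.sharp_union _ hGA _ hGB, C.sharp_compl _ hA,
    C.sharp_compl _ hB, compl_union, compl_compl, compl_compl]

/-- The restriction of an ultrafilter on ℬ is an ultrafilter on 𝒜. -/
lemma res_ultra {q : Set (Set H)} (hq : IsUltraOn (univ : Set H) C.ℬ q) :
    IsUltraOn (C.G : Set H) C.𝒜 (C.res q) := by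
  obtain ⟨hsub, hne, hT, hinter, hup, hdich⟩ := hq
  refine ⟨fun A hA => hA.1, ?_, ?_, ?_, ?_, ?_⟩
  · intro h; rw [CombSetup.res, mem_setOf_eq, C.sharp_empty] at h; exact hne h.2
  · exact ⟨C.alg𝒜.2.2.1, by rw [sharp_G]; exact hT⟩
  · rintro A ⟨hA, hAq⟩ B ⟨hB, hBq⟩
    exact ⟨alg_inter C.alg𝒜 hA hB, by rw [sharp_inter' C hA hB]; exact hinter _ hAq _ hBq⟩
  · rintro A ⟨hA, hAq⟩ B hB hAB
    exact ⟨hB, hup _ hAq _ (C.sharp_mem B hB) (sharp_mono C hA hB hAB)⟩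
  · intro A hA
    rcases hdich (C.sharp A) (C.sharp_mem A hA) with h | h
    · exact Or.inl ⟨hA, h⟩
    · refine Or.inr ⟨C.alg𝒜.2.2.2.1 A hA, ?_⟩
      rw [C.sharp_compl A hA]
      rwa [← compl_eq_univ_diff] at h

/-- For a coheir `q` and `B ∈ ℬ`, membership in `q` is determined by `B ∩ G`. -/
lemma coheir_mem_iff {q : Set (Set H)} (hq : C.IsCoheir q) {B : Set H} (hB : B ∈ C.ℬ) :
    B ∈ q ↔ C.sharp (B ∩ (C.G : Set H)) ∈ q := by
  obtain ⟨⟨hsub, hne, hT, hinter, hup, hdich⟩, hmeets⟩ := hq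
  have hBG : B ∩ (C.G : Set H) ∈ C.𝒜 := C.restrict_mem B hB
  have hsh : C.sharp (B ∩ (C.G : Set H)) ∈ C.ℬ := C.sharp_mem _ hBG
  constructor
  · intro hBq
    by_contra hnot
    have hc : univ \ C.sharp (B ∩ (C.G : Set H)) ∈ q := by
      rcases hdich _ hsh with h | h
      · exact absurd h hnot
      · exact h
    have hcc : C.sharp ((C.G : Set H) \ (B ∩ (C.G : Set H))) ∈ q := by
      rw [C.sharp_compl _ hBG, compl_eq_univ_diff]; exact hc
    have hI : B ∩ C.sharp ((C.G : Set H) \ (B ∩ (C.G : Set H))) ∈ q := hinter _ hBq _ hcc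
    obtain ⟨g, ⟨hgB, hgS⟩, hgG⟩ := hmeets _ hI
    have : g ∈ C.sharp ((C.G : Set H) \ (B ∩ (C.G : Set H))) ∩ (C.G : Set H) := ⟨hgS, hgG⟩
    rw [C.sharp_inter _ (C.alg𝒜.2.2.2.1 _ hBG)] at this
    exact this.2 ⟨hgB, hgG⟩
  · intro hshq
    by_contra hnot
    have hc : univ \ B ∈ q := by
      rcases hdich _ hB with h | h
      · exact absurd h hnot
      · exact h
    have hI : C.sharp (B ∩ (C.G : Set H)) ∩ (univ \ B) ∈ q := hinter _ hshq _ hc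
    obtain ⟨g, ⟨hgS, hgnB⟩, hgG⟩ := hmeets _ hI
    have : g ∈ C.sharp (B ∩ (C.G : Set H)) ∩ (C.G : Set H) := ⟨hgS, hgG⟩
    rw [C.sharp_inter _ hBG] at this
    exact hgnB.2 this.1

/-- dmap at the `univ` level: basic facts. -/
lemma dmap_mem_ℬ {q : Set (Set H)} (hq : IsUltraOn (univ : Set H) C.ℬ q)
    {A : Set H} (hA : A ∈ C.ℬ) : dmap (univ : Set H) q A ∈ C.ℬ :=
  C.dclosedℬ q hq A hA

lemma dmap_empty {q : Set (Set H)} (hq : IsUltraOn (univ : Set H) C.ℬ q) :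
    dmap (univ : Set H) q (∅ : Set H) = ∅ := by
  ext g
  simp only [dmap, mem_setOf_eq, mem_univ, true_and, trL_empty, mem_empty_iff_false, iff_false]
  exact hq.2.1

lemma dmap_univ {q : Set (Set H)} (hq : IsUltraOn (univ : Set H) C.ℬ q) :
    dmap (univ : Set H) q (univ : Set H) = univ := by
  ext g
  simp only [dmap, mem_setOf_eq, mem_univ, true_and, trL_univ, iff_true]
  exact hq.2.2.1

lemma dmap_inter {q : Set (Set H)} (hq : IsUltraOn (univ : Set H) C.ℬ q)
    {A B : Set H} (hA : A ∈ C.ℬ) (hB : B ∈ C.ℬ) :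
    dmap (univ : Set H) q (A ∩ B) = dmap (univ : Set H) q A ∩ dmap (univ : Set H) q B := by
  obtain ⟨hsub, hne, hT, hinter, hup, hdich⟩ := hq
  ext g
  simp only [dmap, mem_setOf_eq, mem_univ, true_and, mem_inter_iff, trL_inter]
  constructor
  · intro h
    have hgA : trL g⁻¹ A ∈ C.ℬ := C.algℬ.2.2.2.2.2 g⁻¹ (mem_univ _) A hA
    have hgB : trL g⁻¹ B ∈ C.ℬ := C.algℬ.2.2.2.2.2 g⁻¹ (mem_univ _) B hB
    exact ⟨hup _ h _ hgA inter_subset_left, hup _ h _ hgB inter_subset_right⟩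
  · intro ⟨h1, h2⟩; exact hinter _ h1 _ h2

lemma dmap_compl {q : Set (Set H)} (hq : IsUltraOn (univ : Set H) C.ℬ q)
    {A : Set H} (hA : A ∈ C.ℬ) :
    dmap (univ : Set H) q (univ \ A) = univ \ dmap (univ : Set H) q A := by
  ext g
  have hgA : trL g⁻¹ A ∈ C.ℬ := C.algℬ.2.2.2.2.2 g⁻¹ (mem_univ _) A hA
  have : trL g⁻¹ (univ \ A) = univ \ trL g⁻¹ A := by rw [trL_diff, trL_univ]
  simp only [dmap, mem_setOf_eq, mem_univ, true_and, mem_diff, this]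
  rw [ultra_compl_iff hq hgA (subset_univ _)]

lemma dmap_mono {q : Set (Set H)} (hq : IsUltraOn (univ : Set H) C.ℬ q)
    {A B : Set H} (hB : B ∈ C.ℬ) (hAB : A ⊆ B) :
    dmap (univ : Set H) q A ⊆ dmap (univ : Set H) q B := by
  intro g hg
  have hgB : trL g⁻¹ B ∈ C.ℬ := C.algℬ.2.2.2.2.2 g⁻¹ (mem_univ _) B hB
  exact ⟨mem_univ _, hq.2.2.2.2.1 _ hg.2 _ hgB (trL_mono _ hAB)⟩

/-- Restriction of `dmap` to `G`: the key commutation fact. -/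
lemma dmap_res_eq {q : Set (Set H)} {A : Set H} (hA : A ∈ C.𝒜) :
    dmap (univ : Set H) q (C.sharp A) ∩ (C.G : Set H) =
      dmap (C.G : Set H) (C.res q) A := by
  ext g
  simp only [dmap, mem_inter_iff, mem_setOf_eq, mem_univ, true_and]
  constructor
  · intro ⟨hq', hgG⟩
    have hginv : (g⁻¹ : H) ∈ C.G := inv_mem hgG
    have htr : trL g⁻¹ A ∈ C.𝒜 := C.alg𝒜.2.2.2.2.2 g⁻¹ hginv A hA
    refine ⟨hgG, htr, ?_⟩
    rwa [C.sharp_trans g⁻¹ hginv A hA]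
  · intro ⟨hgG, _, hsq⟩
    have hginv : (g⁻¹ : H) ∈ C.G := inv_mem hgG
    rw [← C.sharp_trans g⁻¹ hginv A hA]
    exact ⟨hsq, hgG⟩

end Aux

/-- The set $CH(ℬ/𝒜)$ of coheirs over 𝒜 is a sub-semigroup of $(S(ℬ), *)$, and the
restriction map $r$ is a semigroup isomorphism from it onto $S(𝒜)$, with inverse
$p ↦ p^ℬ$. -/
theorem coheirs_subsemigroup_res_iso (C : CombSetup H) :
    (∀ q₁ q₂ : Set (Set H), C.IsCoheir q₁ → C.IsCoheir q₂ →
        C.IsCoheir (ustar (univ : Set H) C.ℬ q₁ q₂)) ∧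
    (∀ q₁ q₂ : Set (Set H), C.IsCoheir q₁ → C.IsCoheir q₂ →
        C.res (ustar (univ : Set H) C.ℬ q₁ q₂) =
          ustar (C.G : Set H) C.𝒜 (C.res q₁) (C.res q₂)) ∧
    (∀ p : Set (Set H), IsUltraOn (C.G : Set H) C.𝒜 p →
        C.IsCoheir (C.coheirExt p) ∧ C.res (C.coheirExt p) = p) ∧
    (∀ q : Set (Set H), C.IsCoheir q → C.coheirExt (C.res q) = q) := by
  -- the product of two ultrafilters on ℬ is an ultrafilter on ℬ
  have ustar_ultra : ∀ q₁ q₂ : Set (Set H), IsUltraOn (univ : Set H) C.ℬ q₁ →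
      IsUltraOn (univ : Set H) C.ℬ q₂ →
      IsUltraOn (univ : Set H) C.ℬ (ustar (univ : Set H) C.ℬ q₁ q₂) := by
    intro q₁ q₂ h1 h2
    refine ⟨fun A hA => hA.1, ?_, ?_, ?_, ?_, ?_⟩
    · rintro ⟨_, h⟩
      rw [dmap_empty C h2] at h
      exact h1.2.1 h
    · exact ⟨C.algℬ.2.2.1, by rw [dmap_univ C h2]; exact h1.2.2.1⟩
    · rintro A ⟨hA, hdA⟩ B ⟨hB, hdB⟩
      exact ⟨alg_inter C.algℬ hA hB,
        by rw [dmap_inter C h2 hA hB]; exact h1.2.2.2.1 _ hdA _ hdB⟩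
    · rintro A ⟨hA, hdA⟩ B hB hAB
      exact ⟨hB, h1.2.2.2.2.1 _ hdA _ (dmap_mem_ℬ C h2 hB) (dmap_mono C h2 hB hAB)⟩
    · intro A hA
      rcases h1.2.2.2.2.2 _ (dmap_mem_ℬ C h2 hA) with h | h
      · exact Or.inl ⟨hA, h⟩
      · exact Or.inr ⟨C.algℬ.2.2.2.1 A hA, by rw [dmap_compl C h2 hA]; exact h⟩
  -- part 1 : coheirs are closed under the product
  have part1 : ∀ q₁ q₂ : Set (Set H), C.IsCoheir q₁ → C.IsCoheir q₂ →
      C.IsCoheir (ustar (univ : Set H) C.ℬ q₁ q₂) := by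
    intro q₁ q₂ h1 h2
    refine ⟨ustar_ultra q₁ q₂ h1.1 h2.1, ?_⟩
    rintro B ⟨hB, hdB⟩
    obtain ⟨g, hgd, hgG⟩ := h1.2 _ hdB
    have htr : trL g⁻¹ B ∈ q₂ := hgd.2
    obtain ⟨g', hg', hg'G⟩ := h2.2 _ htr
    obtain ⟨b, hb, hbg⟩ := hg'
    refine ⟨b, hb, ?_⟩
    have : b = g * g' := by rw [← hbg]; group
    rw [this]
    exact mul_mem hgG hg'G
  refine ⟨part1, ?_, ?_, ?_⟩
  -- part 2 : res is multiplicative on coheirs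
  · intro q₁ q₂ h1 h2
    ext A
    simp only [CombSetup.res, ustar, mem_setOf_eq]
    constructor
    · rintro ⟨hA, _, hd⟩
      have hDB : dmap (univ : Set H) q₂ (C.sharp A) ∈ C.ℬ :=
        dmap_mem_ℬ C h2.1 (C.sharp_mem A hA)
      have := (coheir_mem_iff C h1 hDB).1 hd
      rw [dmap_res_eq C hA] at this
      exact ⟨hA, C.dclosed𝒜 _ (res_ultra C h2.1) A hA, this⟩
    · rintro ⟨hA, _, hd⟩
      refine ⟨hA, C.sharp_mem A hA, ?_⟩
      have hDB : dmap (univ : Set H) q₂ (C.sharp A) ∈ C.ℬ :=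
        dmap_mem_ℬ C h2.1 (C.sharp_mem A hA)
      refine (coheir_mem_iff C h1 hDB).2 ?_
      rw [dmap_res_eq C hA]
      exact hd
  -- part 3 : coheirExt lands in coheirs and res ∘ coheirExt = id
  · intro p hp
    obtain ⟨hsub, hne, hT, hinter, hup, hdich⟩ := hp
    have hext : C.IsCoheir (C.coheirExt p) := by
      constructor
      · refine ⟨fun B hB => hB.1, ?_, ?_, ?_, ?_, ?_⟩
        · rintro ⟨_, h⟩
          rw [empty_inter] at h
          exact hne h
        · exact ⟨C.algℬ.2.2.1, by rw [univ_inter]; exact hT⟩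
        · rintro B₁ ⟨hB₁, hp₁⟩ B₂ ⟨hB₂, hp₂⟩
          refine ⟨alg_inter C.algℬ hB₁ hB₂, ?_⟩
          have : B₁ ∩ B₂ ∩ (C.G : Set H) =
              (B₁ ∩ (C.G : Set H)) ∩ (B₂ ∩ (C.G : Set H)) := by
            ext x; simp only [mem_inter_iff]; tauto
          rw [this]
          exact hinter _ hp₁ _ hp₂
        · rintro B₁ ⟨hB₁, hp₁⟩ B₂ hB₂ hsub'
          exact ⟨hB₂, hup _ hp₁ _ (C.restrict_mem B₂ hB₂)
            (inter_subset_inter_left _ hsub')⟩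
        · intro B hB
          rcases hdich _ (C.restrict_mem B hB) with h | h
          · exact Or.inl ⟨hB, h⟩
          · refine Or.inr ⟨C.algℬ.2.2.2.1 B hB, ?_⟩
            have : (univ \ B) ∩ (C.G : Set H) = (C.G : Set H) \ (B ∩ (C.G : Set H)) := by
              ext x
              simp only [mem_inter_iff, mem_diff, mem_univ, true_and]
              tauto
            rw [this]
            exact h
      · rintro B ⟨_, hBp⟩
        by_contra hempty
        rw [not_nonempty_iff_eq_empty] at hempty
        rw [hempty] at hBp
        exact hne hBp
    refine ⟨hext, ?_⟩
    ext A
    simp only [CombSetup.res, CombSetup.coheirExt, mem_setOf_eq]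
    constructor
    · rintro ⟨hA, _, h⟩
      rwa [C.sharp_inter A hA] at h
    · intro hAp
      have hA : A ∈ C.𝒜 := hsub hAp
      exact ⟨hA, C.sharp_mem A hA, by rwa [C.sharp_inter A hA]⟩
  -- part 4 : coheirExt ∘ res = id on coheirs
  · intro q hq
    ext B
    simp only [CombSetup.coheirExt, CombSetup.res, mem_setOf_eq]
    constructor
    · rintro ⟨hB, _, hsh⟩
      exact (coheir_mem_iff C hq hB).2 hsh
    · intro hBq
      have hB : B ∈ C.ℬ := hq.1.1 hBq
      exact ⟨hB, C.restrict_mem B hB, (coheir_mem_iff C hq hB).1 hBq⟩
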